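/- Let k be a field of characteristic 0, x ∈ k nonzero, and γ ∈ k. Consider the k[t,t⁻¹]-module M = k[t,t⁻¹,(t−x)⁻¹]/k[t,t⁻¹], on which the Witt algebra acts by (f∂)·m = f·m' + γ·f'·m (this action is well-defined on the quotient). Let δ denote the class of (t−x)⁻¹ in M. Then for every p ∈ k[t,t⁻¹] with p(x) = 0, one has (p∂)·δ = (γ−1)·p'(x)·δ. -/

import Mathlib

/-- Formal derivative on Laurent polynomials, sending `tⁿ` to `n·tⁿ⁻¹`. -/
noncomputable def lderiv {k : Type*} [CommRing k] (f : LaurentPolynomial k) : LaurentPolynomial k :=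
  AddMonoidAlgebra.ofCoeff (Finsupp.sum f.coeff fun n a => Finsupp.single (n - 1) ((n : k) * a))

/-- Evaluation of a Laurent polynomial at a point `x` (of a field). -/
noncomputable def lev {k : Type*} [Field k] (x : k) (f : LaurentPolynomial k) : k :=
  Finsupp.sum f.coeff fun n a => a * x ^ n

namespace WittAuxProof

open Polynomial
open LaurentPolynomial (T)

local notation "Cl" => LaurentPolynomial.C

section comm
variable {k : Type*} [CommRing k]

lemma lderiv_C_mul_T (n : ℤ) (a : k) :
    lderiv (Cl a * T n) = Cl ((n : k) * a) * T (n - 1) := by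
  rw [← LaurentPolynomial.single_eq_C_mul_T, ← LaurentPolynomial.single_eq_C_mul_T]
  unfold lderiv
  rw [AddMonoidAlgebra.coeff_single, Finsupp.sum_single_index, AddMonoidAlgebra.ofCoeff_single]
  simp

lemma lderiv_zero : lderiv (0 : LaurentPolynomial k) = 0 := by
  unfold lderiv; simp

lemma lderiv_add (f g : LaurentPolynomial k) : lderiv (f + g) = lderiv f + lderiv g := by
  unfold lderiv
  rw [AddMonoidAlgebra.coeff_add, Finsupp.sum_add_index, AddMonoidAlgebra.ofCoeff_add] <;> intros <;> simp [mul_add, Finsupp.single_add]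

lemma lderiv_sub (f g : LaurentPolynomial k) : lderiv (f - g) = lderiv f - lderiv g := by
  unfold lderiv
  rw [AddMonoidAlgebra.coeff_sub, Finsupp.sum_sub_index, AddMonoidAlgebra.ofCoeff_sub]
  intros; simp [mul_sub, Finsupp.single_sub]

lemma C_mul_T_mul (m n : ℤ) (a b : k) :
    (Cl a * T m) * (Cl b * T n) = Cl (a * b) * T (m + n) := by
  rw [LaurentPolynomial.T_add, map_mul]; exact mul_mul_mul_comm _ _ _ _

lemma lderiv_mul (f g : LaurentPolynomial k) :
    lderiv (f * g) = lderiv f * g + f * lderiv g := by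
  induction g using LaurentPolynomial.induction_on' with
  | add g₁ g₂ h₁ h₂ =>
    rw [mul_add, lderiv_add, h₁, h₂, lderiv_add, mul_add]; ring
  | C_mul_T n b =>
    induction f using LaurentPolynomial.induction_on' with
    | add f₁ f₂ h₁ h₂ =>
      rw [add_mul, lderiv_add, h₁, h₂, lderiv_add, add_mul]; ring
    | C_mul_T m a =>
      rw [C_mul_T_mul, lderiv_C_mul_T, lderiv_C_mul_T, lderiv_C_mul_T,
        C_mul_T_mul, C_mul_T_mul,
        show m - 1 + n = m + n - 1 by ring, show m + (n - 1) = m + n - 1 by ring,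
        ← add_mul, ← map_add]
      push_cast
      ring_nf

lemma lderiv_one : lderiv (1 : LaurentPolynomial k) = 0 := by
  have h := lderiv_C_mul_T (0 : ℤ) (1 : k)
  simpa using h

lemma lderiv_T_one : lderiv (T 1 : LaurentPolynomial k) = 1 := by
  have h := lderiv_C_mul_T (1 : ℤ) (1 : k)
  simpa using h

lemma lderiv_C (a : k) : lderiv (Cl a : LaurentPolynomial k) = 0 := by
  have h := lderiv_C_mul_T (0 : ℤ) a
  simpa using h

lemma lderiv_toLaurent (Q : k[X]) :
    lderiv (Q.toLaurent) = (derivative Q).toLaurent := by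
  induction Q using Polynomial.induction_on' with
  | add f g hf hg => rw [map_add, lderiv_add, hf, hg, derivative_add, map_add]
  | monomial n a =>
    rw [Polynomial.toLaurent_C_mul_T, lderiv_C_mul_T, derivative_monomial,
      Polynomial.toLaurent_C_mul_T]
    cases n with
    | zero => simp
    | succ m =>
      congr 1
      · rw [mul_comm]; push_cast; ring
      · push_cast; ring

end comm

section field
variable {k : Type*} [Field k] {x : k}

lemma lev_C_mul_T (n : ℤ) (a : k) : lev x (Cl a * T n) = a * x ^ n := by
  rw [← LaurentPolynomial.single_eq_C_mul_T]
  unfold lev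
  rw [AddMonoidAlgebra.coeff_single, Finsupp.sum_single_index]
  simp

lemma lev_add (f g : LaurentPolynomial k) : lev x (f + g) = lev x f + lev x g := by
  unfold lev
  rw [AddMonoidAlgebra.coeff_add, Finsupp.sum_add_index] <;> intros <;> simp [add_mul]

lemma lev_sub (f g : LaurentPolynomial k) : lev x (f - g) = lev x f - lev x g := by
  unfold lev
  rw [AddMonoidAlgebra.coeff_sub, Finsupp.sum_sub_index]
  intros; simp [sub_mul]

lemma lev_C (a : k) : lev x (Cl a : LaurentPolynomial k) = a := by
  have h := lev_C_mul_T (x := x) (0 : ℤ) a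
  simpa using h

lemma lev_mul (hx : x ≠ 0) (f g : LaurentPolynomial k) :
    lev x (f * g) = lev x f * lev x g := by
  induction g using LaurentPolynomial.induction_on' with
  | add g₁ g₂ h₁ h₂ => rw [mul_add, lev_add, h₁, h₂, lev_add, mul_add]
  | C_mul_T n b =>
    induction f using LaurentPolynomial.induction_on' with
    | add f₁ f₂ h₁ h₂ => rw [add_mul, lev_add, h₁, h₂, lev_add, add_mul]
    | C_mul_T m a =>
      rw [C_mul_T_mul, lev_C_mul_T, lev_C_mul_T, lev_C_mul_T, zpow_add₀ hx]
      ring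

lemma lev_toLaurent (Q : k[X]) : lev x (Q.toLaurent) = Q.eval x := by
  induction Q using Polynomial.induction_on' with
  | add f g hf hg => rw [map_add, lev_add, hf, hg, eval_add]
  | monomial n a =>
    rw [Polynomial.toLaurent_C_mul_T, lev_C_mul_T, eval_monomial, zpow_natCast]

end field
end WittAuxProof


open Polynomial WittAuxProof in
open LaurentPolynomial (T) in
/-- On `M = k[t,t⁻¹,(t−x)⁻¹]/k[t,t⁻¹]` the Witt algebra acts by `(f∂)·m = f·m' + γ·f'·m`,
and `δ` is the class of `(t−x)⁻¹`.  For `p ∈ k[t,t⁻¹]` with `p(x) = 0` one has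
`(p∂)·δ = (γ−1)·p'(x)·δ` in `M`.  Unfolded (using that the localization embeds, so equality
of classes in `M` means the difference `p·(−(t−x)⁻²) + γ·p'·(t−x)⁻¹ − (γ−1)·p'(x)·(t−x)⁻¹`
lies in `k[t,t⁻¹]`), this says exactly that `(t−x)²` divides
`(γ·p' − (γ−1)·p'(x))·(t−x) − p` in `k[t,t⁻¹]`. -/
theorem witt_action_on_delta {k : Type*} [Field k] [CharZero k]
    (x : k) (hx : x ≠ 0) (γ : k) (p : LaurentPolynomial k) (hp : lev x p = 0) :
    (LaurentPolynomial.T 1 - LaurentPolynomial.C x) ^ 2 ∣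
      (LaurentPolynomial.C γ * lderiv p -
          LaurentPolynomial.C ((γ - 1) * lev x (lderiv p))) *
        (LaurentPolynomial.T 1 - LaurentPolynomial.C x) - p := by
  set A : LaurentPolynomial k :=
    LaurentPolynomial.C γ * lderiv p -
      LaurentPolynomial.C ((γ - 1) * lev x (lderiv p)) with hA
  set w : LaurentPolynomial k := T 1 - LaurentPolynomial.C x with hw
  set g : LaurentPolynomial k := A * w - p with hg
  -- evaluations
  have hlevw : lev x w = 0 := by
    rw [hw, lev_sub, lev_C]
    have h1 : lev x (T 1 : LaurentPolynomial k) = x := by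
      have h := lev_C_mul_T (x := x) (1 : ℤ) (1 : k)
      simpa using h
    rw [h1, sub_self]
  have hlevg : lev x g = 0 := by
    rw [hg, lev_sub, lev_mul hx, hlevw, hp, mul_zero, sub_zero]
  have hlevA : lev x A = lev x (lderiv p) := by
    rw [hA, lev_sub, lev_mul hx, lev_C, lev_C]
    ring
  have hldw : lderiv w = 1 := by
    rw [hw, lderiv_sub, lderiv_T_one, lderiv_C, sub_zero]
  have hlevdg : lev x (lderiv g) = 0 := by
    rw [hg, lderiv_sub, lderiv_mul, hldw, mul_one, lev_sub, lev_add,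
      lev_mul hx, hlevw, mul_zero, zero_add, hlevA, sub_self]
  -- transfer to polynomials
  obtain ⟨N, G, hG⟩ := g.exists_T_pow
  have hGx : G.eval x = 0 := by
    rw [← lev_toLaurent, hG, lev_mul hx, hlevg, zero_mul]
  have hG'x : (derivative G).eval x = 0 := by
    rw [← lev_toLaurent, ← lderiv_toLaurent, hG, lderiv_mul, lev_add,
      lev_mul hx, hlevdg, zero_mul, zero_add, lev_mul hx, hlevg, zero_mul]
  -- double root gives square divisibility
  obtain ⟨H₁, e₁⟩ := (Polynomial.dvd_iff_isRoot).2 hGx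
  have hH₁ : H₁.eval x = 0 := by
    have hd : derivative G = H₁ + (X - Polynomial.C x) * derivative H₁ := by
      rw [e₁, derivative_mul, derivative_sub, derivative_X, derivative_C, sub_zero, one_mul]
    have h2 := hG'x
    rw [hd, eval_add, eval_mul, eval_sub, eval_X, eval_C, sub_self, zero_mul, add_zero] at h2
    exact h2
  obtain ⟨H₂, e₂⟩ := (Polynomial.dvd_iff_isRoot).2 hH₁
  have hGfact : G = (X - Polynomial.C x) ^ 2 * H₂ := by
    rw [e₁, e₂]; ring
  -- back to Laurent polynomials
  have hginv : g = G.toLaurent * T (-(N : ℤ)) := by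
    rw [hG, mul_assoc, ← LaurentPolynomial.T_add]
    simp
  refine ⟨H₂.toLaurent * T (-(N : ℤ)), ?_⟩
  rw [hginv, hGfact, map_mul, map_pow, map_sub, Polynomial.toLaurent_X,
    Polynomial.toLaurent_C, mul_assoc, ← hw]
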